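/- (Concentration from differentiability, abstract form) Let (G_N)_{N∈ℕ} be differentiable convex functions on an open interval I ⊂ ℝ, converging pointwise to f : I → ℝ. Suppose for each N there is a random variable ℓ_N with G_N''(s) ≥ c·N·Var_N(ℓ_N)(s) − C for all s ∈ I, where Var_N(ℓ_N)(s) ≥ 0. If f is differentiable at a point s₀ in the interior of I, then liminf over shrinking intervals yields lim_{r→0} limsup_{N→∞} N ∫_{s₀}^{s₀+r} Var_N(ℓ_N)(s) ds ≤ 0; i.e., N·Var_N(ℓ_N) → 0 in an averaged sense near s₀. -/

import Mathlib

open Filter Topology MeasureTheory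

/-- Abstract concentration from differentiability: convex `C²` functions `G_N` converging
pointwise to `f` on an open interval, with `G_N'' ≥ c N Var_N − C`, force the averaged
variances `N ∫_{s₀}^{s₀+r} Var_N` to vanish near any differentiability point `s₀` of `f`. -/
theorem stmt_12
    (I : Set ℝ) (hIopen : IsOpen I) (hIconv : Convex ℝ I)
    (G : ℕ → ℝ → ℝ) (f : ℝ → ℝ) (V : ℕ → ℝ → ℝ) (c C : ℝ) (hc : 0 < c) (hC : 0 < C)
    (hGC2 : ∀ N, ContDiffOn ℝ 2 (G N) I)
    (hGconv : ∀ N, ConvexOn ℝ I (G N))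
    (hV0 : ∀ N s, 0 ≤ V N s)
    (hVmeas : ∀ N, Measurable (V N))
    (hlower : ∀ N, ∀ s ∈ I, c * N * V N s - C ≤ deriv (deriv (G N)) s)
    (hlim : ∀ s ∈ I, Tendsto (fun N => G N s) atTop (𝓝 (f s)))
    (s₀ : ℝ) (hs₀ : s₀ ∈ I) (hf : DifferentiableAt ℝ f s₀) :
    ∀ ε : ℝ, 0 < ε → ∃ r₀ : ℝ, 0 < r₀ ∧ ∀ r : ℝ, 0 < r → r < r₀ →
      limsup (fun N : ℕ => (N : ℝ) * ∫ s in Set.Ioc s₀ (s₀ + r), V N s) atTop ≤ ε := by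
  intro ε hε
  obtain ⟨δ, hδ0, hball⟩ := Metric.isOpen_iff.mp hIopen s₀ hs₀
  -- slope of f tends to the derivative
  have hslope : Tendsto (slope f s₀) (𝓝[≠] s₀) (𝓝 (deriv f s₀)) :=
    hasDerivAt_iff_tendsto_slope.mp hf.hasDerivAt
  have hmap : ∀ a : ℝ, a ≠ 0 → Tendsto (fun r : ℝ => s₀ + a * r) (𝓝[>] 0) (𝓝[≠] s₀) := by
    intro a ha
    rw [tendsto_nhdsWithin_iff]
    constructor
    · have h1 : Tendsto (fun r : ℝ => s₀ + a * r) (𝓝 0) (𝓝 (s₀ + a * 0)) := by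
        exact (tendsto_const_nhds.add (tendsto_const_nhds.mul tendsto_id))
      have := h1.mono_left (nhdsWithin_le_nhds (s := Set.Ioi (0:ℝ)))
      simpa using this
    · filter_upwards [self_mem_nhdsWithin] with r hr
      have hr' : (0:ℝ) < r := hr
      have : a * r ≠ 0 := mul_ne_zero ha (ne_of_gt hr')
      simp only [Set.mem_setOf_eq, Set.mem_compl_iff, Set.mem_singleton_iff]
      intro hcon
      exact this (by linarith)
  set L := deriv f s₀ with hL
  set φ : ℝ → ℝ := fun r =>
    (2 * slope f s₀ (s₀ + 2 * r) - slope f s₀ (s₀ + 1 * r) - slope f s₀ (s₀ + (-1) * r) + C * r) / c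
    with hφdef
  have hφ : Tendsto φ (𝓝[>] 0) (𝓝 0) := by
    have h2 := hslope.comp (hmap 2 two_ne_zero)
    have h1 := hslope.comp (hmap 1 one_ne_zero)
    have hm := hslope.comp (hmap (-1) (by norm_num))
    have hCr : Tendsto (fun r : ℝ => C * r) (𝓝[>] 0) (𝓝 (C * 0)) :=
      (tendsto_const_nhds.mul tendsto_id).mono_left nhdsWithin_le_nhds
    have hall := ((((h2.const_mul 2).sub h1).sub hm).add hCr).div_const c
    have : (2 * L - L - L + C * 0) / c = 0 := by ring
    rw [this] at hall
    exact hall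
  -- choose r₀
  have hev : ∀ᶠ r in 𝓝[>] (0:ℝ), φ r < ε := hφ.eventually_lt_const hε
  rw [eventually_nhdsWithin_iff, Metric.eventually_nhds_iff] at hev
  obtain ⟨η, hη0, hηsub⟩ := hev
  refine ⟨min η (δ / 3), by positivity, ?_⟩
  intro r hr0 hrlt
  have hrη : r < η := lt_of_lt_of_le hrlt (min_le_left _ _)
  have hrδ : r < δ / 3 := lt_of_lt_of_le hrlt (min_le_right _ _)
  have hφr : φ r < ε := by
    apply hηsub
    · simp [Real.dist_eq, abs_of_pos hr0, hrη]
    · exact hr0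
  -- membership of the relevant points in I
  have hmem : ∀ x : ℝ, |x - s₀| < δ → x ∈ I := fun x hx => hball (by simpa [Real.dist_eq] using hx)
  have hx2I : s₀ + 2 * r ∈ I := hmem _ (by rw [abs_of_pos (by linarith)] <;> linarith)
  have hx1I : s₀ + r ∈ I := hmem _ (by rw [abs_of_pos (by linarith)] <;> linarith)
  have hxmI : s₀ - r ∈ I := hmem _ (by rw [abs_of_neg (by linarith)] <;> linarith)
  have hIccI : Set.Icc s₀ (s₀ + r) ⊆ I := by
    intro t ht
    apply hmem
    rw [abs_of_nonneg (by linarith [ht.1])]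
    have := ht.2; linarith
  -- the comparison sequence
  set b : ℕ → ℝ := fun N =>
    ((G N (s₀ + 2 * r) - G N (s₀ + r)) / r - (G N s₀ - G N (s₀ - r)) / r + C * r) / c with hbdef
  -- per-N inequality for N ≥ 1
  have hkey : ∀ N : ℕ, 1 ≤ N → (N : ℝ) * (∫ s in Set.Ioc s₀ (s₀ + r), V N s) ≤ b N := by
    intro N hN1
    set D := deriv (G N) with hD
    have hGdiff : ∀ x ∈ I, DifferentiableAt ℝ (G N) x := fun x hx =>
      ((hGC2 N).differentiableOn (by norm_num)).differentiableAt (hIopen.mem_nhds hx)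
    have hD1 : ContDiffOn ℝ 1 D I := by
      have := (hGC2 N).deriv_of_isOpen hIopen (m := 1) (by norm_num)
      exact this
    have hDdiff : ∀ x ∈ I, DifferentiableAt ℝ D x := fun x hx =>
      (hD1.differentiableOn (by norm_num)).differentiableAt (hIopen.mem_nhds hx)
    have hD'cont : ContinuousOn (deriv D) I :=
      hD1.continuousOn_deriv_of_isOpen hIopen le_rfl
    have hle : s₀ ≤ s₀ + r := by linarith
    have huIcc : Set.uIcc s₀ (s₀ + r) = Set.Icc s₀ (s₀ + r) := Set.uIcc_of_le hle
    -- FTC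
    have hDint : IntervalIntegrable (deriv D) volume s₀ (s₀ + r) := by
      apply ContinuousOn.intervalIntegrable
      rw [huIcc]; exact hD'cont.mono hIccI
    have hftc : ∫ s in s₀..(s₀ + r), deriv D s = D (s₀ + r) - D s₀ := by
      apply intervalIntegral.integral_deriv_eq_sub
      · intro x hx
        rw [huIcc] at hx
        exact hDdiff x (hIccI hx)
      · exact hDint
    -- bound on V N over the interval
    obtain ⟨M, hM⟩ := (isCompact_Icc (a := s₀) (b := s₀ + r)).exists_bound_of_continuousOn
      (hD'cont.mono hIccI)
    have hcN : (0:ℝ) < c * N := by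
      have : (1:ℝ) ≤ (N:ℝ) := by exact_mod_cast hN1
      nlinarith
    have hVbd : ∀ s ∈ Set.Ioc s₀ (s₀ + r), ‖V N s‖ ≤ (M + C) / (c * N) := by
      intro s hs
      have hsI : s ∈ I := hIccI (Set.Ioc_subset_Icc_self hs)
      have h1 := hlower N s hsI
      have h2 := hM s (Set.Ioc_subset_Icc_self hs)
      have h3 : deriv D s ≤ M := (le_abs_self _).trans (by simpa using h2)
      rw [Real.norm_eq_abs, abs_of_nonneg (hV0 N s)]
      rw [le_div_iff₀ hcN]
      nlinarith [hV0 N s]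
    have hVint : IntegrableOn (V N) (Set.Ioc s₀ (s₀ + r)) volume := by
      refine Integrable.mono' (g := fun _ => (M + C) / (c * N)) (integrableOn_const ?_)
        (hVmeas N).aestronglyMeasurable ?_
      · exact measure_Ioc_lt_top.ne
      · exact (ae_restrict_iff' measurableSet_Ioc).2 (ae_of_all _ hVbd)
    have hlhsint : IntegrableOn (fun s => c * N * V N s - C) (Set.Ioc s₀ (s₀ + r)) volume :=
      (hVint.const_mul _).sub (integrableOn_const measure_Ioc_lt_top.ne)
    have hrhsint : IntegrableOn (deriv D) (Set.Ioc s₀ (s₀ + r)) volume := by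
      have : IntegrableOn (deriv D) (Set.Icc s₀ (s₀ + r)) volume :=
        (hD'cont.mono hIccI).integrableOn_Icc
      exact this.mono_set Set.Ioc_subset_Icc_self
    have hmono : ∫ s in Set.Ioc s₀ (s₀ + r), (c * N * V N s - C)
        ≤ ∫ s in Set.Ioc s₀ (s₀ + r), deriv D s := by
      apply setIntegral_mono_on hlhsint hrhsint measurableSet_Ioc
      intro s hs
      exact hlower N s (hIccI (Set.Ioc_subset_Icc_self hs))
    have hvol : (volume (Set.Ioc s₀ (s₀ + r))).toReal = r := by
      rw [Real.volume_Ioc]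
      simp [ENNReal.toReal_ofReal hr0.le]
    have hlhs : ∫ s in Set.Ioc s₀ (s₀ + r), (c * N * V N s - C)
        = c * N * (∫ s in Set.Ioc s₀ (s₀ + r), V N s) - C * r := by
      rw [integral_sub (hVint.const_mul _) (integrableOn_const measure_Ioc_lt_top.ne)]
      rw [MeasureTheory.integral_const_mul, setIntegral_const, Measure.real, hvol, smul_eq_mul]
      ring
    have hIoceq : ∫ s in Set.Ioc s₀ (s₀ + r), deriv D s = D (s₀ + r) - D s₀ := by
      rw [← intervalIntegral.integral_of_le hle, hftc]
    have hstep1 : c * N * (∫ s in Set.Ioc s₀ (s₀ + r), V N s) - C * r ≤ D (s₀ + r) - D s₀ := by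
      rw [← hlhs, ← hIoceq]; exact hmono
    -- slope bounds from convexity
    have hs1 : D (s₀ + r) ≤ (G N (s₀ + 2 * r) - G N (s₀ + r)) / r := by
      have h := (hGconv N).deriv_le_slope hx1I hx2I (by linarith) (hGdiff _ hx1I)
      rw [slope_def_field] at h
      have heq : (s₀ + 2 * r) - (s₀ + r) = r := by ring
      calc D (s₀ + r) ≤ (G N (s₀ + 2 * r) - G N (s₀ + r)) / ((s₀ + 2 * r) - (s₀ + r)) := h
        _ = (G N (s₀ + 2 * r) - G N (s₀ + r)) / r := by rw [heq]
    have hs2 : (G N s₀ - G N (s₀ - r)) / r ≤ D s₀ := by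
      have h := (hGconv N).slope_le_deriv hxmI hs₀ (by linarith) (hGdiff _ hs₀)
      rw [slope_def_field] at h
      have heq : s₀ - (s₀ - r) = r := by ring
      calc (G N s₀ - G N (s₀ - r)) / r = (G N s₀ - G N (s₀ - r)) / (s₀ - (s₀ - r)) := by rw [heq]
        _ ≤ D s₀ := h
    have hfinal : c * N * (∫ s in Set.Ioc s₀ (s₀ + r), V N s)
        ≤ (G N (s₀ + 2 * r) - G N (s₀ + r)) / r - (G N s₀ - G N (s₀ - r)) / r + C * r := by
      linarith
    rw [hbdef]
    rw [le_div_iff₀ hc]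
    calc (N : ℝ) * (∫ s in Set.Ioc s₀ (s₀ + r), V N s) * c
        = c * N * (∫ s in Set.Ioc s₀ (s₀ + r), V N s) := by ring
      _ ≤ _ := hfinal
  -- limit of b
  have hbtend : Tendsto b atTop
      (𝓝 (((f (s₀ + 2 * r) - f (s₀ + r)) / r - (f s₀ - f (s₀ - r)) / r + C * r) / c)) := by
    apply Tendsto.div_const
    apply Tendsto.add_const
    exact (((hlim _ hx2I).sub (hlim _ hx1I)).div_const r).sub
      (((hlim _ hs₀).sub (hlim _ hxmI)).div_const r)
  have hβφ : ((f (s₀ + 2 * r) - f (s₀ + r)) / r - (f s₀ - f (s₀ - r)) / r + C * r) / c = φ r := by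
    rw [hφdef]
    simp only [slope_def_field]
    have h2r : (s₀ + 2 * r) - s₀ = 2 * r := by ring
    have h1r : (s₀ + 1 * r) - s₀ = r := by ring
    have hmr : (s₀ + (-1) * r) - s₀ = -r := by ring
    rw [h2r, h1r, hmr]
    have hr' : r ≠ 0 := ne_of_gt hr0
    have : s₀ + 1 * r = s₀ + r := by ring
    rw [this]
    have : s₀ + (-1) * r = s₀ - r := by ring
    rw [this]
    field_simp [hr']
    ring
  -- conclude via limsup comparison
  have ha0 : ∀ N : ℕ, 0 ≤ (N : ℝ) * ∫ s in Set.Ioc s₀ (s₀ + r), V N s := by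
    intro N
    apply mul_nonneg (Nat.cast_nonneg N)
    exact setIntegral_nonneg measurableSet_Ioc (fun s _ => hV0 N s)
  have hcobdd : IsCoboundedUnder (· ≤ ·) atTop
      (fun N : ℕ => (N : ℝ) * ∫ s in Set.Ioc s₀ (s₀ + r), V N s) :=
    isCoboundedUnder_le_of_eventually_le atTop (Eventually.of_forall ha0)
  have hbd : IsBoundedUnder (· ≤ ·) atTop b := hbtend.isBoundedUnder_le
  have h1 : limsup (fun N : ℕ => (N : ℝ) * ∫ s in Set.Ioc s₀ (s₀ + r), V N s) atTop
      ≤ limsup b atTop := by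
    apply limsup_le_limsup _ hcobdd hbd
    filter_upwards [eventually_ge_atTop 1] with N hN
    exact hkey N hN
  have h2 : limsup b atTop = ((f (s₀ + 2 * r) - f (s₀ + r)) / r - (f s₀ - f (s₀ - r)) / r + C * r) / c :=
    hbtend.limsup_eq
  rw [h2, hβφ] at h1
  exact h1.trans hφr.le
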